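/- Let H : ℝ^n × ℝ^n → ℝ be such that H(·;y) is strongly convex with uniform constant c > 0 and differentiable for each y, and ∇_x H(x;·) is Lipschitz in y with constant L uniformly in x. Let g be convex, and define x̂(y) = argmin_{x ∈ X} H(x;y) + g(x). Then x̂ is Lipschitz continuous on X with constant L/c: ‖x̂(y) - x̂(z)‖ ≤ (L/c)‖y - z‖. -/

import Mathlib

open scoped RealInnerProductSpace

/-- First-order optimality / variational inequality. -/
lemma vi_aux {n : ℕ} {X : Set (EuclideanSpace ℝ (Fin n))} (hXcv : Convex ℝ X)
    {F : EuclideanSpace ℝ (Fin n) → ℝ} {gF : EuclideanSpace ℝ (Fin n)}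
    {g : EuclideanSpace ℝ (Fin n) → ℝ}
    {u x : EuclideanSpace ℝ (Fin n)} (hu : u ∈ X) (hx : x ∈ X)
    (hF : HasGradientAt F gF u)
    (hg : ConvexOn ℝ Set.univ g)
    (hmin : ∀ w ∈ X, F u + g u ≤ F w + g w) :
    g u - g x ≤ ⟪gF, x - u⟫ := by
  set d : EuclideanSpace ℝ (Fin n) := x - u with hd
  have hline : HasDerivAt (fun t : ℝ => u + t • d) d 0 := by
    simpa using ((hasDerivAt_id (0:ℝ)).smul_const d).const_add u
  have hderiv : HasDerivAt (fun t : ℝ => F (u + t • d)) ⟪gF, d⟫ 0 := by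
    have hF' : HasFDerivAt F ((InnerProductSpace.toDual ℝ (EuclideanSpace ℝ (Fin n))) gF) (u + (0:ℝ) • d) := by
      simpa using hF.hasFDerivAt
    have h := hF'.comp_hasDerivAt 0 hline
    simp at h
    exact h
  set φ : ℝ → ℝ := fun t => F (u + t • d) with hφ
  have hslope : Filter.Tendsto (slope φ 0) (nhdsWithin 0 (Set.Ioi 0)) (nhds ⟪gF, d⟫) := by
    have h1 := hasDerivAt_iff_tendsto_slope.mp hderiv
    exact h1.mono_left (nhdsWithin_mono _ (fun t ht => Set.mem_compl_singleton_iff.mpr (ne_of_gt ht)))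
  refine ge_of_tendsto hslope ?_
  filter_upwards [Ioc_mem_nhdsGT_of_mem (by norm_num : (0:ℝ) ∈ Set.Ico 0 1)] with t ht
  have ht0 : 0 < t := ht.1
  have ht1 : t ≤ 1 := ht.2
  have hxt : u + t • d = (1 - t) • u + t • x := by
    rw [hd]; module
  have hmem : u + t • d ∈ X := by
    rw [hxt]
    exact hXcv hu hx (by linarith) (le_of_lt ht0) (by ring)
  have hgconv : g (u + t • d) ≤ (1 - t) * g u + t * g x := by
    rw [hxt]
    exact hg.2 (Set.mem_univ u) (Set.mem_univ x) (by linarith) (le_of_lt ht0) (by ring)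
  have h1 : F u + g u ≤ F (u + t • d) + g (u + t • d) := hmin _ hmem
  have key : t * (g u - g x) ≤ φ t - φ 0 := by
    simp only [hφ, zero_smul, add_zero]
    nlinarith [h1, hgconv]
  have hs : slope φ 0 t = (φ t - φ 0) / t := by
    rw [slope_def_field]; ring_nf
  rw [hs, le_div_iff₀ ht0]
  nlinarith [key]


/-- Lipschitz continuity of the best-response map: if `H(·;y)` is `c`-strongly
convex (strongly monotone gradient) uniformly in `y`, the partial gradient
`∇ₓH(x;·)` is `L`-Lipschitz uniformly in `x`, and `x̂(y)` minimizes
`H(·;y) + g` over `X`, then `‖x̂(y) - x̂(z)‖ ≤ (L/c)‖y - z‖`. -/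
theorem stmt4 {n : ℕ} (X : Set (EuclideanSpace ℝ (Fin n)))
    (hXne : X.Nonempty) (hXcl : IsClosed X) (hXcv : Convex ℝ X)
    (H : EuclideanSpace ℝ (Fin n) → EuclideanSpace ℝ (Fin n) → ℝ)
    (gradH : EuclideanSpace ℝ (Fin n) → EuclideanSpace ℝ (Fin n) →
      EuclideanSpace ℝ (Fin n))
    (g : EuclideanSpace ℝ (Fin n) → ℝ) (c L : ℝ) (hc : 0 < c) (hL : 0 ≤ L)
    (hgrad : ∀ x, ∀ y ∈ X, HasGradientAt (fun x' => H x' y) (gradH x y) x)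
    (hsm : ∀ y ∈ X, ∀ x ∈ X, ∀ w ∈ X,
      c * ‖x - w‖ ^ 2 ≤ ⟪x - w, gradH x y - gradH w y⟫)
    (hlip : ∀ x, ∀ y ∈ X, ∀ z ∈ X, ‖gradH x y - gradH x z‖ ≤ L * ‖y - z‖)
    (hg : ConvexOn ℝ Set.univ g) (hgc : Continuous g)
    (xhat : EuclideanSpace ℝ (Fin n) → EuclideanSpace ℝ (Fin n))
    (hxhatX : ∀ y ∈ X, xhat y ∈ X)
    (hmin : ∀ y ∈ X, ∀ x ∈ X, H (xhat y) y + g (xhat y) ≤ H x y + g x) :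
    ∀ y ∈ X, ∀ z ∈ X, ‖xhat y - xhat z‖ ≤ L / c * ‖y - z‖ := by
  intro y hy z hz
  set u := xhat y with hu
  set v := xhat z with hv
  have huX : u ∈ X := hxhatX y hy
  have hvX : v ∈ X := hxhatX z hz
  by_cases huv : u = v
  · rw [huv]; simp
    positivity
  have hnorm : 0 < ‖u - v‖ := by
    rw [norm_pos_iff]; exact sub_ne_zero_of_ne huv
  -- VIs
  have vi1 : g u - g v ≤ ⟪gradH u y, v - u⟫ :=
    vi_aux hXcv huX hvX (hgrad u y hy) hg (fun w hw => hmin y hy w hw)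
  have vi2 : g v - g u ≤ ⟪gradH v z, u - v⟫ :=
    vi_aux hXcv hvX huX (hgrad v z hz) hg (fun w hw => hmin z hz w hw)
  have hcross : ⟪u - v, gradH u y - gradH v z⟫ ≤ 0 := by
    have h1 : ⟪gradH u y, v - u⟫ + ⟪gradH v z, u - v⟫ ≥ 0 := by linarith
    have e1 : ⟪u - v, gradH u y - gradH v z⟫
        = -(⟪gradH u y, v - u⟫ + ⟪gradH v z, u - v⟫) := by
      simp only [inner_sub_right, inner_sub_left]
      rw [real_inner_comm u (gradH u y), real_inner_comm v (gradH u y),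
        real_inner_comm u (gradH v z), real_inner_comm v (gradH v z)]
      ring
    linarith [e1 ▸ neg_nonpos_of_nonneg h1]
  have hmono := hsm y hy u huX v hvX
  have hsplit : ⟪u - v, gradH u y - gradH v y⟫
      = ⟪u - v, gradH u y - gradH v z⟫ + ⟪u - v, gradH v z - gradH v y⟫ := by
    rw [← inner_add_right]; congr 1; abel
  have hcs : ⟪u - v, gradH v z - gradH v y⟫ ≤ ‖u - v‖ * (L * ‖y - z‖) := by
    calc ⟪u - v, gradH v z - gradH v y⟫ ≤ ‖u - v‖ * ‖gradH v z - gradH v y‖ :=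
          real_inner_le_norm _ _
      _ ≤ ‖u - v‖ * (L * ‖y - z‖) := by
          apply mul_le_mul_of_nonneg_left _ (norm_nonneg _)
          rw [← norm_neg]; simpa [norm_sub_rev] using hlip v y hy z hz
  have hkey : c * ‖u - v‖ ^ 2 ≤ ‖u - v‖ * (L * ‖y - z‖) := by
    calc c * ‖u - v‖ ^ 2 ≤ ⟪u - v, gradH u y - gradH v y⟫ := hmono
      _ ≤ ‖u - v‖ * (L * ‖y - z‖) := by rw [hsplit]; linarith
  have : c * ‖u - v‖ ≤ L * ‖y - z‖ := by
    nlinarith [hnorm]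
  rw [div_mul_eq_mul_div, le_div_iff₀ hc]
  linarith
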